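/- Define P : ℝ³ × ℝ³ → ℝ³ by P(x,y) = ((x·y - |x||y|)/(x·y + |x||y| + 2|y|²))·y and Q(x,y) = x + y - P(x,y), for linearly independent x, y. Then |P(x,y)| + |Q(x,y)| = |x| + |y| and P(x,y) + Q(x,y) = x + y. -/
import Mathlib


open scoped RealInnerProductSpace

theorem ellipse_map_properties
    (x y : EuclideanSpace ℝ (Fin 3))
    (hli : LinearIndependent ℝ ![x, y])
    (P Q : EuclideanSpace ℝ (Fin 3))
    (hP : P = ((⟪x, y⟫ - ‖x‖ * ‖y‖) / (⟪x, y⟫ + ‖x‖ * ‖y‖ + 2 * ‖y‖^2)) • y)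
    (hQ : Q = x + y - P) :
    ‖P‖ + ‖Q‖ = ‖x‖ + ‖y‖ ∧ P + Q = x + y := by
  obtain ⟨hy0, hax⟩ := linearIndependent_fin2.mp hli
  simp only [Matrix.cons_val_one, Matrix.head_cons, Matrix.cons_val_zero] at hy0 hax
  have hb : 0 < ‖y‖ := norm_pos_iff.mpr hy0
  have ha : 0 ≤ ‖x‖ := norm_nonneg x
  have h1 : ⟪x, y⟫ < ‖x‖ * ‖y‖ := by
    rw [inner_lt_norm_mul_iff_real]
    intro h
    apply hax (‖x‖ / ‖y‖)
    have h' := congrArg (fun v => (‖y‖ : ℝ)⁻¹ • v) h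
    simp only [smul_smul, inv_mul_cancel₀ hb.ne', one_smul] at h'
    rw [div_eq_inv_mul]
    exact h'.symm
  have h2 : -(‖x‖ * ‖y‖) < ⟪x, y⟫ := by
    have hlt : ⟪-x, y⟫ < ‖-x‖ * ‖y‖ := by
      rw [inner_lt_norm_mul_iff_real]
      intro h
      apply hax (-(‖-x‖ / ‖y‖))
      have h' := congrArg (fun v => (‖y‖ : ℝ)⁻¹ • v) h
      simp only [smul_smul, inv_mul_cancel₀ hb.ne', one_smul, smul_neg] at h'
      rw [neg_smul, div_eq_inv_mul, ← h', neg_neg]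
    rw [inner_neg_left, norm_neg] at hlt
    linarith
  have hD : 0 < ⟪x, y⟫ + ‖x‖ * ‖y‖ + 2 * ‖y‖ ^ 2 := by nlinarith
  obtain ⟨t, htdef⟩ : ∃ t : ℝ,
      t = (⟪x, y⟫ - ‖x‖ * ‖y‖) / (⟪x, y⟫ + ‖x‖ * ‖y‖ + 2 * ‖y‖ ^ 2) := ⟨_, rfl⟩
  rw [← htdef] at hP
  have ht : t * (⟪x, y⟫ + ‖x‖ * ‖y‖ + 2 * ‖y‖ ^ 2) = ⟪x, y⟫ - ‖x‖ * ‖y‖ := by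
    rw [htdef, div_mul_cancel₀ _ hD.ne']
  have htneg : t < 0 := htdef ▸ div_neg_of_neg_of_pos (by linarith) hD
  have hPnorm : ‖P‖ = -t * ‖y‖ := by
    rw [hP, norm_smul, Real.norm_eq_abs, abs_of_neg htneg]
  have hQ2 : Q = x + (1 - t) • y := by
    rw [hQ, hP]; module
  have hr : 0 < ‖x‖ + (1 + t) * ‖y‖ := by
    have hprod : (‖x‖ + (1 + t) * ‖y‖) * (⟪x, y⟫ + ‖x‖ * ‖y‖ + 2 * ‖y‖ ^ 2) > 0 := by
      nlinarith
    nlinarith [hprod, hD]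
  have hQsq : ‖Q‖ ^ 2 = (‖x‖ + (1 + t) * ‖y‖) ^ 2 := by
    have h3 : ‖Q‖ ^ 2 = ‖x‖ ^ 2 + 2 * ((1 - t) * ⟪x, y⟫) + ((1 - t) * ‖y‖) ^ 2 := by
      rw [hQ2, norm_add_sq_real, real_inner_smul_right, norm_smul, Real.norm_eq_abs,
        mul_pow, sq_abs, mul_pow]
    rw [h3]
    linear_combination (-2 : ℝ) * ht
  have hQnorm : ‖Q‖ = ‖x‖ + (1 + t) * ‖y‖ := by
    have h4 : ‖Q‖ = |‖x‖ + (1 + t) * ‖y‖| := by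
      rw [← abs_norm Q, ← Real.sqrt_sq_eq_abs, ← Real.sqrt_sq_eq_abs, hQsq]
    rw [h4, abs_of_pos hr]
  refine ⟨?_, ?_⟩
  · rw [hPnorm, hQnorm]; ring
  · rw [hQ]; abel
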